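/- The map Δ = (Δ_1, ..., Δ_{n-1}) from the group of n×n unipotent lower-triangular Toeplitz matrices over a field to affine (n−1)-space, sending x to its lower-left corner minors, has Δ^{-1}(0) = {identity}: if all the minors Δ_1(x), ..., Δ_{n-1}(x) vanish, then x is the identity matrix. -/
import Mathlib


/-- If all the lower-left corner minors `Δ_1(x), ..., Δ_{n-1}(x)` of a unipotent
lower-triangular Toeplitz matrix `x` over a field vanish, then `x` is the identity. -/
theorem toeplitz_corner_minors_vanish_imp_id {n : ℕ} {K : Type*} [Field K]
    (a : ℕ → K) (ha0 : a 0 = 1)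
    (x : Matrix (Fin n) (Fin n) K)
    (hx : ∀ i j : Fin n, x i j = if (j : ℕ) ≤ (i : ℕ) then a ((i : ℕ) - (j : ℕ)) else 0)
    (hΔ : ∀ m : ℕ, 0 < m → (hm : m < n) →
      (x.submatrix
          (fun i : Fin (n - m) => (⟨m + (i : ℕ), by have := i.isLt; omega⟩ : Fin n))
          (fun j : Fin (n - m) => (⟨(j : ℕ), by have := j.isLt; omega⟩ : Fin n))).det = 0) :
    x = 1 := by
  have key : ∀ k : ℕ, ∀ m : ℕ, 0 < m → m < n → n - m ≤ k → a m = 0 := by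
    intro k
    induction k with
    | zero => intro m hm1 hm2 h; omega
    | succ k ih =>
      intro m hm1 hm2 h
      have hzero : ∀ m', m < m' → m' < n → a m' = 0 := fun m' h1 h2 =>
        ih m' (by omega) h2 (by omega)
      set M := x.submatrix
          (fun i : Fin (n - m) => (⟨m + (i : ℕ), by have := i.isLt; omega⟩ : Fin n))
          (fun j : Fin (n - m) => (⟨(j : ℕ), by have := j.isLt; omega⟩ : Fin n)) with hM
      have hupper : M.BlockTriangular id := by
        intro i j hij
        simp only [hM, Matrix.submatrix_apply]
        rw [hx]
        simp only []
        rw [if_pos (by simp at hij ⊢; omega)]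
        exact hzero _ (by simp at hij ⊢; omega) (by have := i.isLt; have := j.isLt; omega)
      have hdet := Matrix.det_of_upperTriangular hupper
      rw [hΔ m hm1 hm2] at hdet
      have hdiag : ∀ i : Fin (n - m), M i i = a m := by
        intro i
        simp only [hM, Matrix.submatrix_apply]
        rw [hx]
        simp only []
        rw [if_pos (by omega)]
        congr 1
        omega
      rw [Finset.prod_congr rfl (fun i _ => hdiag i), Finset.prod_const] at hdet
      have : a m ^ (n - m) = 0 := by simpa using hdet.symm
      exact pow_eq_zero_iff (by omega) |>.mp this
  ext i j
  rw [hx]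
  rcases lt_trichotomy (j : ℕ) (i : ℕ) with h | h | h
  · rw [if_pos (le_of_lt h)]
    rw [key (n) ((i : ℕ) - (j : ℕ)) (by omega) (by have := i.isLt; omega) (by omega)]
    rw [Matrix.one_apply_ne (by intro hij; rw [hij] at h; omega)]
  · rw [if_pos (le_of_eq h)]
    have hij : i = j := Fin.ext h.symm
    subst hij
    simp [ha0]
  · rw [if_neg (by omega), Matrix.one_apply_ne (by intro hij; rw [hij] at h; omega)]
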